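/- If the arity function is compatible with the ordering, then the set of types T(A, P) with the subtype relation forms a partial order. -/
import Mathlib


/-- Types over a type alphabet `C`: type parameters (indexed by `ℕ`) and
applications of type constructors to lists of types. -/
inductive Ty (C : Type) where
  | param : ℕ → Ty C
  | con : C → List (Ty C) → Ty C

/-- The subtype relation on types: `α ≤ α` for parameters, and
`K(σ₁,…,σ_m) ≤ L(τ₁,…,τ_n)` iff `K ≤ L` and `σ_i ≤ τ_i` for all `i < min m n`. -/
inductive Subty {C : Type} [LE C] : Ty C → Ty C → Prop where
  | param (n : ℕ) : Subty (.param n) (.param n)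
  | con {K L : C} {ss ts : List (Ty C)} :
      K ≤ L →
      (∀ i (h1 : i < ss.length) (h2 : i < ts.length), Subty ss[i] ts[i]) →
      Subty (.con K ss) (.con L ts)

/-- Well-formed types with respect to an arity function `ar`:
every constructor is applied to exactly `ar K` arguments. -/
inductive WF {C : Type} (ar : C → ℕ) : Ty C → Prop where
  | param (n : ℕ) : WF ar (.param n)
  | con {K : C} {ss : List (Ty C)} :
      ss.length = ar K → (∀ σ ∈ ss, WF ar σ) → WF ar (.con K ss)

/-- The arity function is compatible with the ordering on the type alphabet. -/
def Compatible {C : Type} [LE C] (ar : C → ℕ) : Prop :=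
  ∀ K L M : C, K ≤ L → L ≤ M → min (ar K) (ar M) ≤ ar L

section Aux
variable {C : Type}

theorem subty_refl [PartialOrder C] (ar : C → ℕ) {σ : Ty C} (h : WF ar σ) : Subty σ σ := by
  induction h with
  | param n => exact .param n
  | con hlen hwf ih =>
    exact .con le_rfl (fun i h1 h2 => ih _ (List.getElem_mem h1))

theorem subty_antisymm [PartialOrder C] (ar : C → ℕ) {σ τ : Ty C}
    (hst : Subty σ τ) : WF ar σ → WF ar τ → Subty τ σ → σ = τ := by
  induction hst with
  | param n => intros; rfl
  | @con K L ss ts hKL h ih =>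
    intro hws hwt hts
    cases hts with
    | con hLK h' =>
      cases hws with
      | con hlens0 hwfs =>
        cases hwt with
        | con hlent hwft =>
          have hKL' : K = L := le_antisymm hKL hLK
          subst hKL'
          have hlen : ss.length = ts.length := by omega
          have : ss = ts := by
            apply List.ext_getElem hlen
            intro i h1 h2
            exact ih i h1 h2 (hwfs _ (List.getElem_mem h1))
              (hwft _ (List.getElem_mem h2)) (h' i h2 h1)
          rw [this]

theorem subty_trans [PartialOrder C] (ar : C → ℕ) (hcompat : Compatible ar)
    {ρ σ : Ty C} (hrs : Subty ρ σ) :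
    WF ar ρ → WF ar σ → ∀ τ, WF ar τ → Subty σ τ → Subty ρ τ := by
  induction hrs with
  | param n => intro _ _ τ _ h; exact h
  | @con K L ss ts hKL h ih =>
    intro hwr hws τ hwt hst
    cases hst with
    | @con _ M _ us hLM h' =>
      cases hwr with
      | con hlens hwfs =>
        cases hws with
        | con hlent hwft =>
          cases hwt with
          | con hlenu hwfu =>
            refine .con (le_trans hKL hLM) (fun i h1 h2 => ?_)
            have hmin := hcompat K L M hKL hLM
            have hi : i < ts.length := by omega
            exact ih i h1 hi (hwfs _ (List.getElem_mem h1))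
              (hwft _ (List.getElem_mem hi)) _ (hwfu _ (List.getElem_mem h2))
              (h' i hi h2)
end Aux

/-- if the arity function is compatible with the ordering, then
the set of (well-formed) types together with the subtype relation is a partial
order, i.e. the subtype relation is reflexive, antisymmetric and transitive. -/
theorem subty_partialOrder {C : Type} [PartialOrder C] (ar : C → ℕ)
    (hcompat : Compatible ar) :
    (∀ σ : Ty C, WF ar σ → Subty σ σ) ∧
    (∀ σ τ : Ty C, WF ar σ → WF ar τ → Subty σ τ → Subty τ σ → σ = τ) ∧
    (∀ ρ σ τ : Ty C, WF ar ρ → WF ar σ → WF ar τ →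
      Subty ρ σ → Subty σ τ → Subty ρ τ) := by
  exact ⟨fun σ h => subty_refl ar h,
    fun σ τ hs ht h1 h2 => subty_antisymm ar h1 hs ht h2,
    fun ρ σ τ hr hs ht h1 h2 => subty_trans ar hcompat h1 hr hs τ ht h2⟩
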